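/- Let x_1, …, x_n ∈ ℝ^D be sensor positions, z_1, …, z_n ∈ {−1,1} signs, and C_1, …, C_n : ℝ → ℝ control functions. Suppose there exists an involution σ of {1,…,n} such that for every i: x_{σ(i)} = −x_i, z_{σ(i)} = z_i, and C_{σ(i)} = C_i. Let f : ℝ^D × ℝ → ℝ be any field that is odd in space, i.e., f(−x, t) = −f(x, t) for all x and t. Then for every t, ∑_{i=1}^n z_i · C_i(t) · f(x_i, t) = 0; in particular the coupling g = ∑_i z_i ∫ f(x_i, t) C_i(t) dt vanishes. -/
import Mathlib

lemma sum_eq_zero_of_antisym {n : ℕ} (σ : Fin n → Fin n) (hinv : ∀ i, σ (σ i) = i)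
    (F : Fin n → ℝ) (hF : ∀ i, F (σ i) = - F i) : ∑ i, F i = 0 := by
  have hbij : Function.Bijective σ := Function.Involutive.bijective hinv
  have h1 : ∑ i, F (σ i) = ∑ i, F i :=
    Fintype.sum_bijective σ hbij _ _ (fun i => rfl)
  have h2 : ∑ i, F (σ i) = - ∑ i, F i := by
    simp [hF]
  linarith [h1, h2]

/-- Paper: Section 'Point symmetric sensors'.
Let `x₁, …, xₙ ∈ ℝ^D` be sensor positions, `z₁, …, zₙ ∈ {−1,1}` signs and
`C₁, …, Cₙ : ℝ → ℝ` control functions. If there is an involution `σ` of the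
sensors with `x_{σ(i)} = −x_i`, `z_{σ(i)} = z_i`, `C_{σ(i)} = C_i`, then for any
field `f` that is odd in space (`f(−x,t) = −f(x,t)`) the instantaneous coupling
`∑_i z_i C_i(t) f(x_i,t)` vanishes for all `t`; in particular the integrated
coupling `∑_i z_i ∫ f(x_i,t) C_i(t) dt` vanishes. -/
theorem point_symmetric_sensor_insensitive_to_odd_field
    (n D : ℕ) (x : Fin n → (Fin D → ℝ)) (z : Fin n → ℝ)
    (hz : ∀ i, z i = 1 ∨ z i = -1)
    (C : Fin n → ℝ → ℝ) (σ : Fin n → Fin n)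
    (hinv : ∀ i, σ (σ i) = i)
    (hx : ∀ i, x (σ i) = - x i)
    (hzσ : ∀ i, z (σ i) = z i)
    (hC : ∀ i, C (σ i) = C i)
    (f : (Fin D → ℝ) → ℝ → ℝ)
    (hf : ∀ y t, f (-y) t = - f y t) :
    (∀ t, ∑ i, z i * C i t * f (x i) t = 0)
      ∧ (∀ T₀ T₁ : ℝ, ∑ i, z i * ∫ t in T₀..T₁, f (x i) t * C i t = 0) := by
  constructor
  · intro t
    refine sum_eq_zero_of_antisym σ hinv _ (fun i => ?_)
    rw [hzσ, hC, hx, hf]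
    ring
  · intro T₀ T₁
    refine sum_eq_zero_of_antisym σ hinv _ (fun i => ?_)
    rw [hzσ, hC, hx]
    have : (∫ t in T₀..T₁, f (-x i) t * C i t)
        = - ∫ t in T₀..T₁, f (x i) t * C i t := by
      rw [← intervalIntegral.integral_neg]
      congr 1; funext t
      rw [hf]; ring
    rw [this]; ring
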